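/- Let α ∈ (0,1), 0 < a < β < 1, λ ≥ 0, and f : ℕ → [0,∞) non-decreasing, unbounded, with ∑_k f(k)a^k < ∞. Define θ_n as in the closed-form expression of Theorem 1 and H(n) = [−θ_n(β−a) + λ(β−1)]/[(1−a)(β−a)] + ∑_{k=n}^∞ f(k)a^{k−n}. Then H(n) > 0 for all sufficiently large n; equivalently, the set {n ∈ ℕ, n ≥ 1 : H(n) > 0} is nonempty, so n* = inf{n ≥ 1 : H(n) > 0} − 1 is well-defined. -/

import Mathlib

set_option maxHeartbeats 2000000 in
theorem stmt12 (α β a lam : ℝ) (hα : α ∈ Set.Ioo (0 : ℝ) 1)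
    (ha0 : 0 < a) (hab : a < β) (hβ1 : β < 1) (hlam : 0 ≤ lam)
    (f : ℕ → ℝ) (hf0 : ∀ k, 0 ≤ f k) (hfmono : Monotone f)
    (hfinf : Filter.Tendsto f Filter.atTop Filter.atTop)
    (hsum : Summable fun k => f k * a ^ k)
    (θ : ℕ → ℝ)
    (hθ : ∀ n : ℕ, 1 ≤ n → θ n =
      (f 0 / (1 - α) + (∑ k ∈ Finset.Icc 1 (n - 1), f (n - k) * β ^ (n - k - 1)) +
        β ^ (n - 1) * (∑' k : ℕ, f (n + k) * a ^ k) + lam * β ^ (n - 1) / (1 - a)) /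
        (1 / (1 - α) + (1 - β ^ (n - 1)) / (1 - β) + β ^ (n - 1) / (1 - a)))
    (H : ℕ → ℝ)
    (hH : ∀ n : ℕ, H n = (-θ n * (β - a) + lam * (β - 1)) / ((1 - a) * (β - a)) +
      ∑' k : ℕ, f (n + k) * a ^ k) :
    (∃ N : ℕ, 1 ≤ N ∧ ∀ n, N ≤ n → 0 < H n) ∧
    {n : ℕ | 1 ≤ n ∧ 0 < H n}.Nonempty := by
  obtain ⟨hα0, hα1⟩ := hα
  have hβ0 : 0 < β := ha0.trans hab
  have h1a : 0 < 1 - a := by linarith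
  have h1β : 0 < 1 - β := by linarith
  have h1α : 0 < 1 - α := by linarith
  have hβa : 0 < β - a := by linarith
  have ha1 : a < 1 := lt_trans hab hβ1
  -- Summability of the shifted tail series
  have hT : ∀ n : ℕ, Summable fun k => f (n + k) * a ^ k := by
    intro n
    have h1 : Summable fun k => f (k + n) * a ^ (k + n) :=
      (summable_nat_add_iff n).2 hsum
    have h2 := h1.mul_right ((a ^ n)⁻¹)
    refine h2.congr fun k => ?_
    have han : (a : ℝ) ^ n ≠ 0 := (pow_pos ha0 n).ne'
    rw [add_comm k n, pow_add]
    field_simp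
  have hT0 : ∀ n : ℕ, 0 ≤ ∑' k : ℕ, f (n + k) * a ^ k := fun n =>
    tsum_nonneg fun k => mul_nonneg (hf0 _) (pow_nonneg ha0.le _)
  have hTf : ∀ n : ℕ, f n ≤ ∑' k : ℕ, f (n + k) * a ^ k := by
    intro n
    have := Summable.le_tsum (hT n) 0 (fun k _ => mul_nonneg (hf0 _) (pow_nonneg ha0.le _))
    simpa using this
  -- Reindex the finite sum
  have hS : ∀ n : ℕ, 1 ≤ n →
      (∑ k ∈ Finset.Icc 1 (n - 1), f (n - k) * β ^ (n - k - 1)) =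
      ∑ j ∈ Finset.Icc 1 (n - 1), f j * β ^ (j - 1) := by
    intro n hn
    refine Finset.sum_nbij' (fun k => n - k) (fun j => n - j) ?_ ?_ ?_ ?_ ?_
    · intro k hk
      simp only [Finset.mem_Icc] at hk ⊢
      omega
    · intro j hj
      simp only [Finset.mem_Icc] at hj ⊢
      omega
    · intro k hk
      simp only [Finset.mem_Icc] at hk
      change n - (n - k) = k
      omega
    · intro j hj
      simp only [Finset.mem_Icc] at hj
      change n - (n - j) = j
      omega
    · intro k _
      rfl
  -- Geometric tail bound
  have hgeo : ∀ m L : ℕ, (∑ j ∈ Finset.Ioc m L, β ^ (j - 1)) ≤ β ^ m / (1 - β) := by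
    intro m L
    have h1 : (∑ j ∈ Finset.Ioc m L, β ^ (j - 1))
        = ∑ i ∈ Finset.range (L + 1 - (m + 1)), β ^ (m + i) := by
      have hIoc : Finset.Ioc m L = Finset.Ico (m + 1) (L + 1) := by
        rw [← Finset.Icc_add_one_left_eq_Ioc, Finset.Ico_add_one_right_eq_Icc]
      rw [hIoc, Finset.sum_Ico_eq_sum_range]
      refine Finset.sum_congr rfl fun i _ => ?_
      congr 1
      omega
    rw [h1]
    calc (∑ i ∈ Finset.range (L + 1 - (m + 1)), β ^ (m + i))
        = β ^ m * ∑ i ∈ Finset.range (L + 1 - (m + 1)), β ^ i := by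
          rw [Finset.mul_sum]
          exact Finset.sum_congr rfl fun i _ => by rw [pow_add]
      _ ≤ β ^ m * (1 - β)⁻¹ := by
          refine mul_le_mul_of_nonneg_left ?_ (pow_nonneg hβ0.le m)
          have hsg : Summable fun i : ℕ => β ^ i :=
            summable_geometric_of_lt_one hβ0.le hβ1
          have h2 := Summable.sum_le_tsum (Finset.range (L + 1 - (m + 1)))
            (fun i _ => pow_nonneg hβ0.le i) hsg
          rwa [tsum_geometric_of_lt_one hβ0.le hβ1] at h2
      _ = β ^ m / (1 - β) := by rw [div_eq_mul_inv]
  -- Choose m with β^m small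
  obtain ⟨m, hm⟩ := exists_pow_lt_of_lt_one
    (show (0:ℝ) < (1 - a) * (1 - β) / (4 * (1 - α)) by positivity) hβ1
  set ε : ℝ := (1 - a) / (4 * (1 - α)) with hεdef
  have hε0 : 0 < ε := by positivity
  have hmε : β ^ m / (1 - β) ≤ ε := by
    rw [div_le_iff₀ h1β]
    have : ε * (1 - β) = (1 - a) * (1 - β) / (4 * (1 - α)) := by
      rw [hεdef]; ring
    rw [this]
    exact hm.le
  -- constants
  set C₁ : ℝ := ∑ j ∈ Finset.Icc 1 m, f j * β ^ (j - 1) with hC₁def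
  have hC₁0 : 0 ≤ C₁ :=
    Finset.sum_nonneg fun j _ => mul_nonneg (hf0 _) (pow_nonneg hβ0.le _)
  set K₀ : ℝ := f 0 + (1 - α) * C₁ + (1 - α) * lam / (1 - a) with hK₀def
  have hK₀0 : 0 ≤ K₀ := by
    have := hf0 0
    have h1 : 0 ≤ (1 - α) * C₁ := mul_nonneg h1α.le hC₁0
    have h2 : 0 ≤ (1 - α) * lam / (1 - a) := by positivity
    rw [hK₀def]; linarith
  set C₂ : ℝ := lam * (1 - β) / ((1 - a) * (β - a)) with hC₂def
  have hC₂0 : 0 ≤ C₂ := by positivity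
  set M : ℝ := 2 * (K₀ + (1 - a) * C₂) / (1 - a) + 1 with hMdef
  obtain ⟨N₂, hN₂⟩ := (hfinf.eventually_ge_atTop M).exists_forall_of_atTop
  set N : ℕ := max (m + 2) (max N₂ 1) with hNdef
  have hN1 : 1 ≤ N := le_trans (le_max_right N₂ 1) (le_max_right _ _)
  have hmain : ∀ n, N ≤ n → 0 < H n := by
    intro n hn
    have hn1 : 1 ≤ n := le_trans hN1 hn
    have hnm : m + 2 ≤ n := le_trans (le_max_left _ _) hn
    have hnN2 : N₂ ≤ n := le_trans (le_trans (le_max_left N₂ 1) (le_max_right _ _)) hn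
    set T : ℝ := ∑' k : ℕ, f (n + k) * a ^ k with hTdef
    have hT0' : 0 ≤ T := hT0 n
    have hTfn : f n ≤ T := hTf n
    have hfnM : M ≤ f n := hN₂ n hnN2
    have hTM : M ≤ T := le_trans hfnM hTfn
    -- bound on the finite sum
    have hSb : (∑ k ∈ Finset.Icc 1 (n - 1), f (n - k) * β ^ (n - k - 1)) ≤ C₁ + ε * T := by
      rw [hS n hn1]
      have hsplit : (∑ j ∈ Finset.Icc 1 (n - 1), f j * β ^ (j - 1))
          = (∑ j ∈ Finset.Icc 1 m, f j * β ^ (j - 1))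
            + ∑ j ∈ Finset.Ioc m (n - 1), f j * β ^ (j - 1) := by
        have e1 : Finset.Icc 1 (n - 1) = Finset.Ioc 0 (n - 1) := by
          ext x; simp only [Finset.mem_Icc, Finset.mem_Ioc]; omega
        have e2 : Finset.Icc 1 m = Finset.Ioc 0 m := by
          ext x; simp only [Finset.mem_Icc, Finset.mem_Ioc]; omega
        rw [e1, e2]
        exact (Finset.sum_Ioc_consecutive _ (Nat.zero_le m) (by omega)).symm
      rw [hsplit]
      have htail : (∑ j ∈ Finset.Ioc m (n - 1), f j * β ^ (j - 1)) ≤ ε * T := by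
        calc (∑ j ∈ Finset.Ioc m (n - 1), f j * β ^ (j - 1))
            ≤ ∑ j ∈ Finset.Ioc m (n - 1), f n * β ^ (j - 1) := by
              refine Finset.sum_le_sum fun j hj => ?_
              have hjn : j ≤ n := by
                have := (Finset.mem_Ioc.1 hj).2; omega
              exact mul_le_mul_of_nonneg_right (hfmono hjn) (pow_nonneg hβ0.le _)
          _ = f n * ∑ j ∈ Finset.Ioc m (n - 1), β ^ (j - 1) := by rw [Finset.mul_sum]
          _ ≤ f n * (β ^ m / (1 - β)) :=
              mul_le_mul_of_nonneg_left (hgeo m (n - 1)) (hf0 n)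
          _ ≤ T * ε := by
              refine mul_le_mul hTfn hmε (by positivity) hT0'
          _ = ε * T := mul_comm _ _
      linarith [htail]
    -- bound on β^(n-1)
    have hpowm : β ^ (n - 1) ≤ β ^ m :=
      pow_le_pow_of_le_one hβ0.le hβ1.le (by omega)
    have hpow1 : β ^ (n - 1) ≤ 1 := pow_le_one₀ hβ0.le hβ1.le
    have hpow0 : 0 ≤ β ^ (n - 1) := pow_nonneg hβ0.le _
    have hpowε : β ^ (n - 1) ≤ ε := by
      refine le_trans hpowm (le_trans ?_ hmε)
      rw [le_div_iff₀ h1β]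
      nlinarith [pow_nonneg hβ0.le m]
    -- bound θ n
    have hDge : 1 / (1 - α) ≤
        1 / (1 - α) + (1 - β ^ (n - 1)) / (1 - β) + β ^ (n - 1) / (1 - a) := by
      have h1 : 0 ≤ (1 - β ^ (n - 1)) / (1 - β) := div_nonneg (by linarith) h1β.le
      have h2 : 0 ≤ β ^ (n - 1) / (1 - a) := div_nonneg hpow0 h1a.le
      linarith
    have hDpos : 0 < 1 / (1 - α) + (1 - β ^ (n - 1)) / (1 - β) + β ^ (n - 1) / (1 - a) :=
      lt_of_lt_of_le (by positivity) hDge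
    have hNum0 : 0 ≤ f 0 / (1 - α) + (∑ k ∈ Finset.Icc 1 (n - 1), f (n - k) * β ^ (n - k - 1)) +
        β ^ (n - 1) * T + lam * β ^ (n - 1) / (1 - a) := by
      have h1 : 0 ≤ f 0 / (1 - α) := div_nonneg (hf0 0) h1α.le
      have h2 : 0 ≤ ∑ k ∈ Finset.Icc 1 (n - 1), f (n - k) * β ^ (n - k - 1) :=
        Finset.sum_nonneg fun k _ => mul_nonneg (hf0 _) (pow_nonneg hβ0.le _)
      have h3 : 0 ≤ β ^ (n - 1) * T := mul_nonneg hpow0 hT0'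
      have h4 : 0 ≤ lam * β ^ (n - 1) / (1 - a) := by positivity
      linarith
    have hθle1 : θ n ≤ (1 - α) * (f 0 / (1 - α) +
        (∑ k ∈ Finset.Icc 1 (n - 1), f (n - k) * β ^ (n - k - 1)) +
        β ^ (n - 1) * T + lam * β ^ (n - 1) / (1 - a)) := by
      rw [hθ n hn1]
      rw [div_le_iff₀ hDpos]
      have key : (1 - α) * (1 / (1 - α)) = 1 := by field_simp
      nlinarith [hNum0, hDge, mul_le_mul_of_nonneg_left hDge
        (mul_nonneg h1α.le hNum0)]
    -- combine
    have hθle2 : θ n ≤ K₀ + (1 - a) / 2 * T := by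
      have e1 : (1 - α) * (f 0 / (1 - α)) = f 0 := by field_simp
      have h2 : β ^ (n - 1) * T ≤ ε * T := mul_le_mul_of_nonneg_right hpowε hT0'
      have h3 : lam * β ^ (n - 1) / (1 - a) ≤ lam / (1 - a) := by
        rw [div_le_div_iff₀ h1a h1a]
        nlinarith [mul_le_mul_of_nonneg_left hpow1 (mul_nonneg hlam h1a.le)]
      have hεT : (1 - α) * (ε * T) = (1 - a) / 4 * T := by
        rw [hεdef]; field_simp
      have hcomb := hθle1
      have hstep : (1 - α) * (f 0 / (1 - α) +
          (∑ k ∈ Finset.Icc 1 (n - 1), f (n - k) * β ^ (n - k - 1)) +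
          β ^ (n - 1) * T + lam * β ^ (n - 1) / (1 - a))
          ≤ f 0 + (1 - α) * (C₁ + ε * T) + (1 - α) * (ε * T) + (1 - α) * (lam / (1 - a)) := by
        have b1 := mul_le_mul_of_nonneg_left hSb h1α.le
        have b2 := mul_le_mul_of_nonneg_left h2 h1α.le
        have b3 := mul_le_mul_of_nonneg_left h3 h1α.le
        nlinarith [e1]
      have : f 0 + (1 - α) * (C₁ + ε * T) + (1 - α) * (ε * T) + (1 - α) * (lam / (1 - a))
          = K₀ + (1 - a) / 2 * T := by
        rw [hK₀def]
        have : (1 - α) * (C₁ + ε * T) = (1 - α) * C₁ + (1 - α) * (ε * T) := by ring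
        rw [this, hεT]
        field_simp
        ring
      linarith
    -- final computation
    have hHeq : H n = T - θ n / (1 - a) - C₂ := by
      rw [hH n, ← hTdef]
      rw [hC₂def]
      field_simp
      ring
    rw [hHeq]
    have hθdiv : θ n / (1 - a) ≤ (K₀ + (1 - a) / 2 * T) / (1 - a) :=
      div_le_div_of_nonneg_right hθle2 h1a.le
    have hM2 : M = 2 * (K₀ / (1 - a)) + 2 * C₂ + 1 := by
      rw [hMdef, hC₂def]; field_simp
    have hKd : (K₀ + (1 - a) / 2 * T) / (1 - a) = K₀ / (1 - a) + T / 2 := by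
      field_simp
    rw [hKd] at hθdiv
    clear_value T M C₂ K₀ C₁ ε
    linarith [hTM, hθdiv, hT0', hM2, hC₂0, hK₀0]
  refine ⟨⟨N, hN1, hmain⟩, ⟨N, hN1, hmain N le_rfl⟩⟩
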